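/- For an odd prime p and n ≥ 1, in K = ℚ(ζ_{p^n}): Tr_{K/ℚ}( ((1−ζ_{p^n})(1−ζ_{p^n}^{-1}))^{-1} ) = p^{2(n-1)}·(p²−1)/12. -/

import Mathlib

noncomputable section

/-- Total positivity: all complex embeddings take positive real values. -/
def totPos (K : Type*) [Field K] [NumberField K] (a : K) : Prop :=
  ∀ φ : K →+* ℂ, 0 < (φ a).re ∧ (φ a).im = 0

/-- The real value `Tr_{K/ℚ}(a·x·x̄) = ∑_φ φ(a)·|φ(x)|²` of the unary trace form at `x`. -/
def qform (K : Type*) [Field K] [NumberField K] (a x : K) : ℝ :=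
  ∑ φ : K →+* ℂ, (φ a).re * Complex.normSq (φ x)

/-- `μ(a)`: the infimum of the trace form over nonzero algebraic integers. -/
def muK (K : Type*) [Field K] [NumberField K] (a : K) : ℝ :=
  sInf { t | ∃ x : NumberField.RingOfIntegers K, x ≠ 0 ∧ t = qform K a (x : K) }

/-- `μ*(a)`: the infimum of the trace form over units. -/
def muStarK (K : Type*) [Field K] [NumberField K] (a : K) : ℝ :=
  sInf { t | ∃ u : (NumberField.RingOfIntegers K)ˣ,
    t = qform K a ((u : NumberField.RingOfIntegers K) : K) }

/-- A number field is unit reducible if `μ(a) = μ*(a)` for all totally positive `a`. -/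
def UnitReducible (K : Type*) [Field K] [NumberField K] : Prop :=
  ∀ a : K, totPos K a → muK K a = muStarK K a

/-- The reduction discrepancy `δ_K = sup_a μ*(a)/μ(a)`. -/
def deltaK (K : Type*) [Field K] [NumberField K] : ℝ :=
  sSup { t | ∃ a : K, totPos K a ∧ t = muStarK K a / muK K a }

open Finset Polynomial

-- Lemma A
lemma lemA (m : ℕ) (w : ℂ) (hw : w ^ m = 1) (hw1 : w ≠ 1) :
    (w - 1) * ∑ j ∈ range m, (j : ℂ) * w ^ j = m := by
  have key : ∀ n : ℕ, (w - 1)^2 * ∑ j ∈ range n, (j : ℂ) * w ^ j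
      = ((n:ℂ) - 1) * w ^ (n+1) - (n:ℂ) * w ^ n + w := by
    intro n
    induction n with
    | zero => simp
    | succ n ih =>
      rw [Finset.sum_range_succ, mul_add, ih]
      push_cast
      ring
  have h2 := key m
  have hm1 : w ^ (m+1) = w := by rw [pow_succ, hw, one_mul]
  rw [hm1, hw] at h2
  have hne : w - 1 ≠ 0 := sub_ne_zero.mpr hw1
  have : (w - 1) * ((w - 1) * ∑ j ∈ range m, (j : ℂ) * w ^ j) = (w - 1) * m := by
    rw [← mul_assoc, ← sq, h2]; ring
  exact mul_left_cancel₀ hne this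

lemma lemGeom (m : ℕ) (w : ℂ) (hw : w ^ m = 1) :
    ∑ k ∈ range m, w ^ k = if w = 1 then (m : ℂ) else 0 := by
  split_ifs with h
  · simp [h]
  · rw [geom_sum_eq h, hw, sub_self, zero_div]

lemma lemSumId (m : ℕ) : ∑ i ∈ range m, (i : ℂ) = m * (m - 1) / 2 := by
  induction m with
  | zero => simp
  | succ n ih => rw [Finset.sum_range_succ, ih]; push_cast; ring

lemma lemSumSq (m : ℕ) : ∑ i ∈ range m, (i : ℂ)^2 = m * (m - 1) * (2*m - 1) / 6 := by
  induction m with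
  | zero => simp
  | succ n ih => rw [Finset.sum_range_succ, ih]; push_cast; ring

lemma lemC (m : ℕ) (hm : 1 ≤ m) (ξ : ℂ) (hξ : IsPrimitiveRoot ξ m) :
    ∑ k ∈ Ico 1 m, ((1 - ξ^k) * (1 - (ξ^k)⁻¹))⁻¹ = ((m:ℂ)^2 - 1) / 12 := by
  have hm0 : (m : ℂ) ≠ 0 := Nat.cast_ne_zero.mpr (by omega)
  have hξ0 : ξ ≠ 0 := hξ.ne_zero (by omega)
  set G : ℕ → ℂ := fun k =>
    ∑ i ∈ range m, ∑ j ∈ range m, ((i:ℂ) * (j:ℂ)) * ((ξ^k)^i * (ξ^(m-k))^j) with hG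
  have hterm : ∀ k ∈ Ico 1 m, ((1 - ξ^k) * (1 - (ξ^k)⁻¹))⁻¹ = G k / (m:ℂ)^2 := by
    intro k hk
    rw [Finset.mem_Ico] at hk
    have hk1 : ξ ^ k ≠ 1 := hξ.pow_ne_one_of_pos_of_lt (by omega) hk.2
    have hk2 : ξ ^ (m-k) ≠ 1 := hξ.pow_ne_one_of_pos_of_lt (by omega) (by omega)
    have hmul : ξ ^ k * ξ ^ (m - k) = 1 := by
      rw [← pow_add]
      have h : k + (m - k) = m := by omega
      rw [h, hξ.pow_eq_one]
    have hinv : (ξ^k)⁻¹ = ξ^(m-k) := inv_eq_of_mul_eq_one_right hmul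
    have h1 := lemA m (ξ^k) (by rw [← pow_mul, mul_comm, pow_mul, hξ.pow_eq_one, one_pow]) hk1
    have h2 := lemA m (ξ^(m-k)) (by rw [← pow_mul, mul_comm, pow_mul, hξ.pow_eq_one, one_pow]) hk2
    have hne1 : ξ^k - 1 ≠ 0 := sub_ne_zero.mpr hk1
    have hne2 : ξ^(m-k) - 1 ≠ 0 := sub_ne_zero.mpr hk2
    have hne1' : 1 - ξ^k ≠ 0 := sub_ne_zero.mpr (Ne.symm hk1)
    have hne2' : 1 - ξ^(m-k) ≠ 0 := sub_ne_zero.mpr (Ne.symm hk2)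
    have hS1 : ∑ j ∈ range m, (j:ℂ) * (ξ^k)^j = m / (ξ^k - 1) := by
      field_simp; linear_combination h1
    have hS2 : ∑ j ∈ range m, (j:ℂ) * (ξ^(m-k))^j = m / (ξ^(m-k) - 1) := by
      field_simp; linear_combination h2
    have hGk : G k = (∑ i ∈ range m, (i:ℂ) * (ξ^k)^i) * (∑ j ∈ range m, (j:ℂ) * (ξ^(m-k))^j) := by
      rw [Finset.sum_mul_sum]
      exact Finset.sum_congr rfl fun i _ => Finset.sum_congr rfl fun j _ => by ring
    rw [hGk, hS1, hS2, hinv]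
    field_simp
    ring
  rw [Finset.sum_congr rfl hterm, ← Finset.sum_div]
  have hsplit : ∑ k ∈ range m, G k = G 0 + ∑ k ∈ Ico 1 m, G k := by
    rw [Finset.range_eq_Ico, Finset.sum_eq_sum_Ico_succ_bot (by omega : 0 < m)]
  have hG0 : G 0 = (∑ i ∈ range m, (i:ℂ))^2 := by
    rw [hG]
    simp only [pow_zero, one_pow, one_mul, Nat.sub_zero, hξ.pow_eq_one, mul_one]
    rw [sq, Finset.sum_mul_sum]
  have hGtot : ∑ k ∈ range m, G k = m * ∑ i ∈ range m, (i:ℂ)^2 := by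
    rw [hG]
    simp only []
    rw [Finset.sum_comm]
    have houter : ∀ i ∈ range m,
        (∑ k ∈ range m, ∑ j ∈ range m, ((i:ℂ)*(j:ℂ)) * ((ξ^k)^i * (ξ^(m-k))^j))
        = (m:ℂ) * (i:ℂ)^2 := by
      intro i hi
      rw [Finset.mem_range] at hi
      rw [Finset.sum_comm]
      have inner : ∀ j ∈ range m, (∑ k ∈ range m, ((i:ℂ)*(j:ℂ)) * ((ξ^k)^i * (ξ^(m-k))^j))
          = if (i:ℕ) = j then (i:ℂ)*(j:ℂ)*(m:ℂ) else 0 := by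
        intro j hj
        rw [Finset.mem_range] at hj
        rw [← Finset.mul_sum]
        have hw : ∀ k ∈ range m, (ξ^k)^i * (ξ^(m-k))^j = (ξ^i * (ξ^j)⁻¹)^k := by
          intro k hk
          rw [Finset.mem_range] at hk
          have h1 : (ξ^(m-k))^j * ((ξ^j)^k) = 1 := by
            rw [← pow_mul, ← pow_mul, ← pow_add]
            have h : (m-k)*j + j*k = m * j := by
              have h' : m - k + k = m := by omega
              calc (m-k)*j + j*k = (m - k + k) * j := by ring
              _ = m * j := by rw [h']
            rw [h, pow_mul, hξ.pow_eq_one, one_pow]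
          have h2 : (ξ^(m-k))^j = ((ξ^j)⁻¹)^k := by
            rw [inv_pow]
            exact eq_inv_of_mul_eq_one_left h1
          calc (ξ^k)^i * (ξ^(m-k))^j = (ξ^i)^k * ((ξ^j)⁻¹)^k := by
                rw [h2, ← pow_mul, ← pow_mul, mul_comm k i]
          _ = (ξ^i * (ξ^j)⁻¹)^k := (mul_pow _ _ _).symm
        rw [Finset.sum_congr rfl hw]
        have hwm : (ξ^i * (ξ^j)⁻¹)^m = 1 := by
          rw [mul_pow, ← pow_mul, mul_comm i m, pow_mul, hξ.pow_eq_one, one_pow, inv_pow,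
            ← pow_mul, mul_comm j m, pow_mul, hξ.pow_eq_one, one_pow, inv_one, mul_one]
        rw [lemGeom m _ hwm]
        have hcond : (ξ^i * (ξ^j)⁻¹ = 1) ↔ i = j := by
          rw [mul_inv_eq_one₀ (pow_ne_zero j hξ0)]
          exact ⟨fun h => hξ.pow_inj hi hj h, fun h => by rw [h]⟩
        simp only [hcond]
        split_ifs with h
        · ring
        · ring
      rw [Finset.sum_congr rfl inner, Finset.sum_ite_eq]
      simp [Finset.mem_range.mpr hi]
      ring
    rw [Finset.sum_congr rfl houter, ← Finset.mul_sum]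
  rw [hGtot, hG0, lemSumSq, lemSumId] at hsplit
  have hIco : ∑ k ∈ Ico 1 m, G k
      = (m:ℂ) * ((m:ℂ)*((m:ℂ)-1)*(2*(m:ℂ)-1)/6) - ((m:ℂ)*((m:ℂ)-1)/2)^2 := by
    linear_combination -hsplit
  rw [hIco]
  field_simp
  ring

lemma lemD (m : ℕ) (hm : 1 ≤ m) (ξ : ℂ) (hξ : IsPrimitiveRoot ξ m) :
    ∑ η ∈ (Polynomial.nthRootsFinset m (1 : ℂ)).erase 1, ((1 - η) * (1 - η⁻¹))⁻¹
      = ((m:ℂ)^2 - 1) / 12 := by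
  have hm0 : 0 < m := hm
  haveI : NeZero m := ⟨by omega⟩
  rw [← lemC m hm ξ hξ]
  refine (Finset.sum_bij (fun (k : ℕ) (_ : k ∈ Ico 1 m) => ξ ^ k) ?_ ?_ ?_ ?_).symm
  · intro k hk
    rw [Finset.mem_Ico] at hk
    refine Finset.mem_erase.mpr ⟨hξ.pow_ne_one_of_pos_of_lt (by omega) hk.2, ?_⟩
    rw [Polynomial.mem_nthRootsFinset hm0, ← pow_mul, mul_comm, pow_mul, hξ.pow_eq_one, one_pow]
  · intro k1 h1 k2 h2 he
    rw [Finset.mem_Ico] at h1 h2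
    exact hξ.pow_inj (by omega) (by omega) he
  · intro η hη
    rw [Finset.mem_erase, Polynomial.mem_nthRootsFinset hm0] at hη
    obtain ⟨i, hi, rfl⟩ := hξ.eq_pow_of_pow_eq_one hη.2
    have hi0 : i ≠ 0 := by
      rintro rfl
      exact hη.1 (pow_zero ξ)
    exact ⟨i, Finset.mem_Ico.mpr ⟨by omega, hi⟩, rfl⟩
  · intro k hk
    rfl

lemma lemPrim (p n : ℕ) (hp : p.Prime) (hn : 1 ≤ n) :
    primitiveRoots (p ^ n) ℂ
      = (Polynomial.nthRootsFinset (p ^ n) (1 : ℂ)).erase 1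
        \ (Polynomial.nthRootsFinset (p ^ (n-1)) (1 : ℂ)).erase 1 := by
  have hp1 : 1 < p := hp.one_lt
  have hpos : 0 < p ^ n := Nat.pow_pos (n := n) (by omega)
  have hpos' : 0 < p ^ (n-1) := Nat.pow_pos (by omega)
  have h1lt : 1 < p ^ n := Nat.one_lt_pow (by omega) hp1
  ext η
  rw [mem_primitiveRoots hpos, Finset.mem_sdiff, Finset.mem_erase, Finset.mem_erase,
    Polynomial.mem_nthRootsFinset hpos, Polynomial.mem_nthRootsFinset hpos']
  constructor
  · intro h
    have hne1 : η ≠ 1 := h.ne_one h1lt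
    refine ⟨⟨hne1, h.pow_eq_one⟩, ?_⟩
    rintro ⟨-, hsm⟩
    have hdvd : p ^ n ∣ p ^ (n-1) := h.dvd_of_pow_eq_one _ hsm
    have := (Nat.pow_dvd_pow_iff_le_right hp1).mp hdvd
    omega
  · rintro ⟨⟨hne1, hbig⟩, hnot⟩
    have hsm : η ^ (p ^ (n-1)) ≠ 1 := fun h => hnot ⟨hne1, h⟩
    have hd : orderOf η ∣ p ^ n := orderOf_dvd_of_pow_eq_one hbig
    obtain ⟨i, hi, hoi⟩ := (Nat.dvd_prime_pow hp).mp hd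
    have hin : i = n := by
      by_contra hne
      apply hsm
      have : orderOf η ∣ p ^ (n-1) := hoi ▸ pow_dvd_pow p (by omega)
      exact orderOf_dvd_iff_pow_eq_one.mp this
    have := IsPrimitiveRoot.orderOf η
    rwa [hoi, hin] at this


/-- For an odd prime `p` and `n ≥ 1`, in `ℚ(ζ_{p^n})`:
`Tr(((1-ζ)(1-ζ⁻¹))⁻¹) = p^{2(n-1)}·(p²-1)/12`. -/
theorem stmt11 (p nn : ℕ) (hp : p.Prime) (hodd : p ≠ 2) (hn : 1 ≤ nn)
    (M : ℕ+) (hM : (M : ℕ) = p ^ nn)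
    (K : Type) [Field K] [Algebra ℚ K] [IsCyclotomicExtension {(M : ℕ)} ℚ K]
    (ζ : K) (hζ : IsPrimitiveRoot ζ (p ^ nn)) :
    Algebra.trace ℚ K (((1 - ζ) * (1 - ζ⁻¹))⁻¹) =
      (p : ℚ) ^ (2 * (nn - 1)) * ((p : ℚ) ^ 2 - 1) / 12 := by
  obtain ⟨t, rfl⟩ : ∃ t, nn = t + 1 := ⟨nn - 1, by omega⟩
  have hp1 : 1 < p := hp.one_lt
  haveI : NumberField K := IsCyclotomicExtension.numberField {(M : ℕ)} ℚ K
  have hζ' : IsPrimitiveRoot ζ (M : ℕ) := by rw [hM]; exact hζ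
  have hirr : Irreducible (Polynomial.cyclotomic (M : ℕ) ℚ) :=
    Polynomial.cyclotomic.irreducible_rat M.pos
  apply (algebraMap ℚ ℂ).injective
  rw [trace_eq_sum_embeddings (E := ℂ)]
  have hσ : ∀ σ : K →ₐ[ℚ] ℂ, σ (((1 - ζ) * (1 - ζ⁻¹))⁻¹)
      = ((1 - σ ζ) * (1 - (σ ζ)⁻¹))⁻¹ := by
    intro σ
    simp only [map_inv₀, map_mul, map_sub, map_one]
  have hsum : ∑ σ : K →ₐ[ℚ] ℂ, σ (((1 - ζ) * (1 - ζ⁻¹))⁻¹)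
      = ∑ η ∈ primitiveRoots (M : ℕ) ℂ, ((1 - η) * (1 - η⁻¹))⁻¹ := by
    rw [← Finset.sum_coe_sort (primitiveRoots (M : ℕ) ℂ)]
    refine Fintype.sum_equiv (hζ'.embeddingsEquivPrimitiveRoots ℂ hirr) _ _ fun σ => ?_
    rw [hσ σ, hζ'.embeddingsEquivPrimitiveRoots_apply_coe ℂ hirr σ]
  rw [hsum, hM, lemPrim p (t+1) hp (by omega)]
  have hsub : (Polynomial.nthRootsFinset (p ^ (t+1-1)) (1 : ℂ)).erase 1
      ⊆ (Polynomial.nthRootsFinset (p ^ (t+1)) (1 : ℂ)).erase 1 := by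
    intro η hη
    rw [Finset.mem_erase, Polynomial.mem_nthRootsFinset (Nat.pow_pos (by omega))] at hη ⊢
    refine ⟨hη.1, ?_⟩
    obtain ⟨c, hc⟩ : p ^ (t+1-1) ∣ p ^ (t+1) := pow_dvd_pow p (by omega)
    rw [hc, pow_mul, hη.2, one_pow]
  rw [Finset.sum_sdiff_eq_sub hsub]
  have hexp1 : (p : ℕ) ^ (t+1) ≠ 0 := by positivity
  have hexp2 : (p : ℕ) ^ (t+1-1) ≠ 0 := by positivity
  rw [lemD _ (Nat.one_le_iff_ne_zero.mpr hexp1) _ (Complex.isPrimitiveRoot_exp _ hexp1),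
    lemD _ (Nat.one_le_iff_ne_zero.mpr hexp2) _ (Complex.isPrimitiveRoot_exp _ hexp2)]
  have halg : algebraMap ℚ ℂ ((p : ℚ) ^ (2 * (t+1-1)) * ((p : ℚ) ^ 2 - 1) / 12)
      = ((p : ℂ) ^ (2 * t) * ((p : ℂ) ^ 2 - 1) / 12) := by
    simp only [Nat.add_sub_cancel]
    push_cast
    field_simp
    norm_num
  rw [halg]
  simp only [Nat.add_sub_cancel]
  push_cast
  ring
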